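/- arXiv:1802.10116 — 7 statements merged into one kernel-verified Lean document; each statement's English description precedes it below -/
import Mathlib

section
/- Let n ≥ 1 and q be natural numbers with q ≤ ⌈n/2⌉ - 1. Let s : Fin n → ℝ be a sequence of n real values, of which at least n - q belong to a nonempty finite set U of 'correct' values u_1, …, u_{n-q}. Then the median m of the sequence s (i.e., the value at position ⌊(n-1)/2⌋ and/or ⌈(n-1)/2⌉ of the sorted sequence; for odd n, the middle element) satisfies min_i u_i ≤ m ≤ max_i u_i. -/
/-- The element at sorted position `k` of the sequence `s` (0 if out of range). -/
noncomputable def seqSorted {n : ℕ} (s : Fin n → ℝ) (k : ℕ) : ℝ :=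
  if h : k < n then s (Tuple.sort s ⟨k, h⟩) else 0

lemma aux_stmt0 {n q : ℕ} (s : Fin n → ℝ) (C : Finset (Fin n)) (hCne : C.Nonempty)
    (hCcard : n - q ≤ C.card) (k : ℕ) (hk : k < n) (hql : q ≤ k) (hqr : k + q < n) :
    C.inf' hCne s ≤ seqSorted s k ∧ seqSorted s k ≤ C.sup' hCne s := by
  have hmono : Monotone (s ∘ Tuple.sort s) := Tuple.monotone_sort s
  rw [seqSorted, dif_pos hk]
  constructor
  · by_contra h
    push_neg at h
    set T : Finset (Fin n) := Finset.univ.filter (fun i => s i < C.inf' hCne s) with hT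
    have hdisj : Disjoint C T := by
      rw [Finset.disjoint_right]
      intro i hiT hiC
      simp only [hT, Finset.mem_filter, Finset.mem_univ, true_and] at hiT
      exact absurd (Finset.inf'_le s hiC) (not_le.2 hiT)
    have hcard1 : T.card ≤ q := by
      have h1 := Finset.card_union_of_disjoint hdisj
      have h2 : (C ∪ T).card ≤ n := by
        simpa using Finset.card_le_univ (C ∪ T)
      omega
    have hsub : (Finset.Iic (⟨k, hk⟩ : Fin n)).image (Tuple.sort s) ⊆ T := by
      intro i hi
      simp only [Finset.mem_image] at hi
      obtain ⟨j, hj, rfl⟩ := hi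
      simp only [hT, Finset.mem_filter, Finset.mem_univ, true_and]
      calc s (Tuple.sort s j) ≤ s (Tuple.sort s ⟨k, hk⟩) := hmono (Finset.mem_Iic.mp hj)
        _ < C.inf' hCne s := h
    have hcard2 : k + 1 ≤ T.card := by
      have h3 := Finset.card_le_card hsub
      rwa [Finset.card_image_of_injective _ (Tuple.sort s).injective,
        Fin.card_Iic] at h3
    omega
  · by_contra h
    push_neg at h
    set T : Finset (Fin n) := Finset.univ.filter (fun i => C.sup' hCne s < s i) with hT
    have hdisj : Disjoint C T := by
      rw [Finset.disjoint_right]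
      intro i hiT hiC
      simp only [hT, Finset.mem_filter, Finset.mem_univ, true_and] at hiT
      exact absurd (Finset.le_sup' s hiC) (not_le.2 hiT)
    have hcard1 : T.card ≤ q := by
      have h1 := Finset.card_union_of_disjoint hdisj
      have h2 : (C ∪ T).card ≤ n := by
        simpa using Finset.card_le_univ (C ∪ T)
      omega
    have hsub : (Finset.Ici (⟨k, hk⟩ : Fin n)).image (Tuple.sort s) ⊆ T := by
      intro i hi
      simp only [Finset.mem_image] at hi
      obtain ⟨j, hj, rfl⟩ := hi
      simp only [hT, Finset.mem_filter, Finset.mem_univ, true_and]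
      calc C.sup' hCne s < s (Tuple.sort s ⟨k, hk⟩) := h
        _ ≤ s (Tuple.sort s j) := hmono (Finset.mem_Ici.mp hj)
    have hcard2 : n - k ≤ T.card := by
      have h3 := Finset.card_le_card hsub
      rwa [Finset.card_image_of_injective _ (Tuple.sort s).injective,
        Fin.card_Ici] at h3
    omega

/-- with at least `n - q` correct entries (indices in `C`),
`q ≤ ⌈n/2⌉ - 1`, the median (at position `⌊(n-1)/2⌋` and/or `⌈(n-1)/2⌉` of the
sorted sequence) lies between the min and max of the correct values. -/
theorem stmt0 {n q : ℕ} (hn : 1 ≤ n) (hq : q ≤ (n + 1) / 2 - 1)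
    (s : Fin n → ℝ) (C : Finset (Fin n)) (hCne : C.Nonempty)
    (hCcard : n - q ≤ C.card) :
    (C.inf' hCne s ≤ seqSorted s ((n - 1) / 2) ∧
      seqSorted s ((n - 1) / 2) ≤ C.sup' hCne s) ∧
    (C.inf' hCne s ≤ seqSorted s (n / 2) ∧
      seqSorted s (n / 2) ≤ C.sup' hCne s) := by
  refine ⟨aux_stmt0 s C hCne hCcard _ (by omega) (by omega) (by omega),
    aux_stmt0 s C hCne hCcard _ (by omega) (by omega) (by omega)⟩
end

section
/- Let n be odd, and let s : Fin n → ℝ contain at most q Byzantine entries with 2q < n, the remaining entries being correct values. Then on each side of the median in the sorted order there is at least one correct value; consequently the median lies in the closed interval [min of correct values, max of correct values]. -/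
/-- for `n` odd and a Byzantine index set `B` with `|B| ≤ q`, `2q < n`,
on each side of the median (rank `(n-1)/2`) there is a correct value; hence the
median lies in `[min correct, max correct]`. -/
theorem stmt1 {n q : ℕ} (hodd : Odd n) (h2q : 2 * q < n)
    (s : Fin n → ℝ) (B : Finset (Fin n)) (hB : B.card ≤ q) :
    (∃ i ∉ B, s i ≤ seqSorted s ((n - 1) / 2)) ∧
    (∃ j ∉ B, seqSorted s ((n - 1) / 2) ≤ s j) ∧
    seqSorted s ((n - 1) / 2) ∈
      Set.Icc ((Bᶜ : Finset (Fin n)).inf' (by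
          rw [Finset.nonempty_iff_ne_empty]
          intro h
          have := Finset.card_compl (s := B) (α := Fin n)
          simp [h] at this
          omega) s)
        ((Bᶜ : Finset (Fin n)).sup' (by
          rw [Finset.nonempty_iff_ne_empty]
          intro h
          have := Finset.card_compl (s := B) (α := Fin n)
          simp [h] at this
          omega) s) := by
  obtain ⟨m, hm⟩ := hodd
  have hmn : (n - 1) / 2 = m := by omega
  have hmlt : m < n := by omega
  set mm : Fin n := ⟨m, hmlt⟩ with hmm
  have hmed : seqSorted s ((n - 1) / 2) = s (Tuple.sort s mm) := by
    simp [seqSorted, hmn, hmlt, hmm]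
  have hmono := Tuple.monotone_sort s
  -- lower side
  have hlow : ∃ i ∉ B, s i ≤ seqSorted s ((n - 1) / 2) := by
    set S := (Finset.Iic mm).image (Tuple.sort s) with hS
    have hcard : S.card = m + 1 := by
      rw [hS, Finset.card_image_of_injective _ (Tuple.sort s).injective,
        Fin.card_Iic]
    have hne : (S \ B).Nonempty := by
      rw [← Finset.card_pos]
      have := Finset.le_card_sdiff B S
      omega
    obtain ⟨i, hi⟩ := hne
    rw [Finset.mem_sdiff] at hi
    obtain ⟨hiS, hiB⟩ := hi
    refine ⟨i, hiB, ?_⟩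
    rw [hS, Finset.mem_image] at hiS
    obtain ⟨k, hk, rfl⟩ := hiS
    rw [hmed]
    exact hmono (Finset.mem_Iic.mp hk)
  have hhigh : ∃ j ∉ B, seqSorted s ((n - 1) / 2) ≤ s j := by
    set S := (Finset.Ici mm).image (Tuple.sort s) with hS
    have hcard : S.card = n - m := by
      rw [hS, Finset.card_image_of_injective _ (Tuple.sort s).injective,
        Fin.card_Ici]
    have hne : (S \ B).Nonempty := by
      rw [← Finset.card_pos]
      have := Finset.le_card_sdiff B S
      omega
    obtain ⟨i, hi⟩ := hne
    rw [Finset.mem_sdiff] at hi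
    obtain ⟨hiS, hiB⟩ := hi
    refine ⟨i, hiB, ?_⟩
    rw [hS, Finset.mem_image] at hiS
    obtain ⟨k, hk, rfl⟩ := hiS
    rw [hmed]
    exact hmono (Finset.mem_Ici.mp hk)
  refine ⟨hlow, hhigh, ?_, ?_⟩
  · obtain ⟨i, hiB, hi⟩ := hlow
    exact le_trans (Finset.inf'_le _ (Finset.mem_compl.mpr hiB)) hi
  · obtain ⟨j, hjB, hj⟩ := hhigh
    exact le_trans hj (Finset.le_sup' _ (Finset.mem_compl.mpr hjB))
end

section
/- Let u_1, …, u_m be reals (correct values), μ the median of a sequence containing them plus at most q ≤ ⌈n/2⌉ - 1 Byzantine values (n = m + q), and ρ the mean of the n - q entries nearest to μ. Fix g ∈ ℝ. Then (ρ - g)² ≤ 10 · max_i (u_i - g)². -/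
/-- The median of `s : Fin n → ℝ` (rank `⌊(n-1)/2⌋` in the sorted order). -/
noncomputable def seqMedian {n : ℕ} (s : Fin n → ℝ) : ℝ :=
  seqSorted s ((n - 1) / 2)

/-- with correct values `u₁, …, u_m` embedded in a sequence `s` of
length `n = m + q`, `q ≤ ⌈n/2⌉ - 1`, `μ` the median of `s`, and `ρ` the mean of
the `n - q` entries nearest to `μ`, we have `(ρ - g)² ≤ 10·max_i (u_i - g)²`. -/
theorem stmt7 {n q m : ℕ} (hn : 0 < n) (hm : 0 < m) (hnm : n = m + q)
    (hq : q ≤ (n + 1) / 2 - 1)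
    (u : Fin m → ℝ) (s : Fin n → ℝ)
    (ι : Fin m → Fin n) (hι : Function.Injective ι) (hsu : ∀ i, s (ι i) = u i)
    (W : Finset (Fin n)) (hWcard : W.card = n - q)
    (hWsel : ∀ i ∈ W, ∀ j, j ∉ W → |s i - seqMedian s| ≤ |s j - seqMedian s|)
    (g : ℝ) :
    ((∑ i ∈ W, s i) / ((n : ℝ) - (q : ℝ)) - g) ^ 2 ≤
      10 * Finset.univ.sup'
        (Finset.univ_nonempty_iff.mpr (Fin.pos_iff_nonempty.mp hm))
        (fun i => (u i - g) ^ 2) := by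
  have hne : (Finset.univ : Finset (Fin m)).Nonempty :=
    Finset.univ_nonempty_iff.mpr (Fin.pos_iff_nonempty.mp hm)
  set μ := seqMedian s with hμdef
  set k : ℕ := (n - 1) / 2 with hkdef
  have hk : k < n := by omega
  have hqk : q ≤ k := by omega
  have hnk : q + k + 1 ≤ n := by omega
  have hμeq : μ = s (Tuple.sort s ⟨k, hk⟩) := by
    simp [hμdef, seqMedian, seqSorted, hk, hkdef]
    exact dif_pos hk
  have hmono := Tuple.monotone_sort s
  set C : Finset (Fin n) := Finset.univ.image ι with hCdef
  have hCcard : C.card = m := by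
    rw [hCdef, Finset.card_image_of_injective _ hι, Finset.card_univ, Fintype.card_fin]
  -- card of complement of range ι
  have hCcompl : Cᶜ.card = q := by
    rw [Finset.card_compl, hCcard, Fintype.card_fin]; omega
  -- there is a correct value ≤ μ
  have hlow : ∃ j : Fin m, u j ≤ μ := by
    by_contra h
    push_neg at h
    set L : Finset (Fin n) := Finset.univ.filter (fun i => s i ≤ μ) with hLdef
    have hLsub : L ⊆ Cᶜ := by
      intro i hi
      simp only [hLdef, Finset.mem_filter] at hi
      simp only [Finset.mem_compl, hCdef, Finset.mem_image]
      rintro ⟨j, -, rfl⟩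
      exact absurd (hsu j ▸ hi.2) (not_le.mpr (h j))
    have hcard1 : k + 1 ≤ L.card := by
      have : (Finset.univ : Finset (Fin (k + 1))).card ≤ L.card := by
        apply Finset.card_le_card_of_injOn (fun j => Tuple.sort s (Fin.castLE hk j))
        · intro j _
          simp only [hLdef, Finset.mem_coe, Finset.mem_filter, Finset.mem_univ, true_and]
          rw [hμeq]
          exact hmono (show (Fin.castLE hk j : Fin n) ≤ ⟨k, hk⟩ by
            exact Fin.mk_le_mk.mpr (Nat.lt_succ_iff.mp j.2))
        · intro a _ b _ hab
          exact Fin.castLE_injective _ ((Tuple.sort s).injective hab)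
      simpa using this
    have := Finset.card_le_card hLsub
    omega
  -- there is a correct value ≥ μ
  have hhigh : ∃ j : Fin m, μ ≤ u j := by
    by_contra h
    push_neg at h
    set L : Finset (Fin n) := Finset.univ.filter (fun i => μ ≤ s i) with hLdef
    have hLsub : L ⊆ Cᶜ := by
      intro i hi
      simp only [hLdef, Finset.mem_filter] at hi
      simp only [Finset.mem_compl, hCdef, Finset.mem_image]
      rintro ⟨j, -, rfl⟩
      exact absurd (hsu j ▸ hi.2) (not_le.mpr (h j))
    have hcard1 : n - k ≤ L.card := by
      have : (Finset.univ : Finset (Fin (n - k))).card ≤ L.card := by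
        apply Finset.card_le_card_of_injOn
          (fun j : Fin (n - k) => Tuple.sort s ⟨k + (j : ℕ), by have := j.isLt; omega⟩)
        · intro j _
          simp only [hLdef, Finset.mem_coe, Finset.mem_filter, Finset.mem_univ, true_and]
          rw [hμeq]
          exact hmono (show (⟨k, hk⟩ : Fin n) ≤ ⟨k + (j : ℕ), by omega⟩ by
            exact Fin.mk_le_mk.mpr (Nat.le_add_right _ _))
        · intro a _ b _ hab
          have := (Tuple.sort s).injective hab
          simp only [Fin.mk.injEq] at this
          exact Fin.ext (by omega)
      simpa using this
    have := Finset.card_le_card hLsub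
    omega
  set M : ℝ := Finset.univ.sup' hne (fun i => |u i - g|) with hMdef
  have hMle : ∀ j : Fin m, |u j - g| ≤ M :=
    fun j => Finset.le_sup' (fun i => |u i - g|) (Finset.mem_univ j)
  have hM0 : 0 ≤ M := le_trans (abs_nonneg _) (hMle hlow.choose)
  -- median within M of g
  have hμg : |μ - g| ≤ M := by
    obtain ⟨a, ha⟩ := hlow
    obtain ⟨b, hb⟩ := hhigh
    rw [abs_sub_le_iff]
    constructor
    · calc μ - g ≤ u b - g := by linarith
        _ ≤ |u b - g| := le_abs_self _
        _ ≤ M := hMle b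
    · calc g - μ ≤ g - u a := by linarith
        _ ≤ |u a - g| := (abs_sub_comm (u a) g) ▸ le_abs_self _
        _ ≤ M := hMle a
  -- each selected entry within 2M of μ
  have hWM : ∀ i ∈ W, |s i - μ| ≤ 2 * M := by
    intro i hi
    have key : ∃ j : Fin m, |s i - μ| ≤ |u j - μ| := by
      by_cases hiC : i ∈ C
      · simp only [hCdef, Finset.mem_image, Finset.mem_univ, true_and] at hiC
        obtain ⟨j, rfl⟩ := hiC
        exact ⟨j, by rw [hsu]⟩
      · have hCW : ¬ C ⊆ W := by
          intro hsub
          have : C = W := Finset.eq_of_subset_of_card_le hsub (by omega)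
          exact hiC (this ▸ hi)
        obtain ⟨j', hj'C, hj'W⟩ := Finset.not_subset.mp hCW
        simp only [hCdef, Finset.mem_image, Finset.mem_univ, true_and] at hj'C
        obtain ⟨j, rfl⟩ := hj'C
        exact ⟨j, by rw [← hsu j]; exact hWsel i hi _ hj'W⟩
    obtain ⟨j, hj⟩ := key
    calc |s i - μ| ≤ |u j - μ| := hj
      _ ≤ |u j - g| + |g - μ| := by
          have := abs_sub_le (u j) g μ; linarith
      _ ≤ M + M := add_le_add (hMle j) (abs_sub_comm g μ ▸ hμg)
      _ = 2 * M := by ring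
  -- mean within 2M of μ
  have hWm : W.card = m := by omega
  have hnq : (n : ℝ) - (q : ℝ) = (m : ℝ) := by
    have : (n : ℝ) = (m : ℝ) + (q : ℝ) := by exact_mod_cast hnm
    linarith
  have hm0 : (0 : ℝ) < (m : ℝ) := by exact_mod_cast hm
  set ρ : ℝ := (∑ i ∈ W, s i) / ((n : ℝ) - (q : ℝ)) with hρdef
  have hρμ : |ρ - μ| ≤ 2 * M := by
    have hsum : |∑ i ∈ W, (s i - μ)| ≤ (m : ℝ) * (2 * M) := by
      calc |∑ i ∈ W, (s i - μ)| ≤ ∑ i ∈ W, |s i - μ| := Finset.abs_sum_le_sum_abs _ _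
        _ ≤ ∑ _i ∈ W, 2 * M := Finset.sum_le_sum hWM
        _ = (m : ℝ) * (2 * M) := by rw [Finset.sum_const, hWm, nsmul_eq_mul]
    have hρμ' : ρ - μ = (∑ i ∈ W, (s i - μ)) / (m : ℝ) := by
      rw [hρdef, hnq, Finset.sum_sub_distrib, Finset.sum_const, hWm, nsmul_eq_mul,
        sub_div, mul_div_assoc]
      field_simp
    rw [hρμ', abs_div, abs_of_pos hm0, div_le_iff₀ hm0]
    linarith
  -- conclude
  have hρg : |ρ - g| ≤ 3 * M := by
    calc |ρ - g| ≤ |ρ - μ| + |μ - g| := abs_sub_le ρ μ g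
      _ ≤ 2 * M + M := add_le_add hρμ hμg
      _ = 3 * M := by ring
  set S : ℝ := Finset.univ.sup' hne (fun i => (u i - g) ^ 2) with hSdef
  have hMS : M ^ 2 ≤ S := by
    obtain ⟨i₀, -, hi₀⟩ := Finset.exists_mem_eq_sup' hne (fun i => |u i - g|)
    rw [hMdef, hi₀, sq_abs (u i₀ - g)]
    exact Finset.le_sup' (fun i => (u i - g) ^ 2) (Finset.mem_univ i₀)
  have hS0 : 0 ≤ S := le_trans (sq_nonneg (u hlow.choose - g))
    (Finset.le_sup' (fun i => (u i - g) ^ 2) (Finset.mem_univ hlow.choose))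
  have h1 : (ρ - g) ^ 2 ≤ (3 * M) ^ 2 := by
    rw [← sq_abs (ρ - g)]
    exact pow_le_pow_left₀ (abs_nonneg _) hρg 2
  calc (ρ - g) ^ 2 ≤ (3 * M) ^ 2 := h1
    _ = 9 * M ^ 2 := by ring
    _ ≤ 9 * S := by linarith
    _ ≤ 10 * S := by linarith
end

section
/- The averaging aggregation rule is not dimensional Byzantine resilient: there exist vectors ṽ_1, …, ṽ_n ∈ ℝ^d with at most 1 Byzantine value per dimension relative to correct vectors v_1, …, v_n with common mean g ≠ 0, such that the average (1/n)Σ ṽ_i has negative inner product with g. Specifically, if ṽ_i = v_i for i < n and ṽ_n = -g - Σ_{i=1}^{n-1} v_i, then E[(1/n)Σ ṽ_i] = -g/n and ⟨E[(1/n)Σ ṽ_i], g⟩ = -‖g‖²/n < 0. -/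
open MeasureTheory

/-- averaging is not dimensional Byzantine resilient.  If
`ṽᵢ = vᵢ` for `i < n` and `ṽₙ = -g - Σ_{i<n} vᵢ` (one Byzantine value per
dimension), then `E[(1/n)Σ ṽᵢ] = -g/n` and `⟨E[(1/n)Σ ṽᵢ], g⟩ = -‖g‖²/n < 0`. -/
theorem stmt10 {Ω : Type*} [MeasurableSpace Ω] (P : Measure Ω)
    [IsProbabilityMeasure P] {n d : ℕ} (hn : 0 < n)
    (v : Fin n → Ω → EuclideanSpace ℝ (Fin d))
    (hint : ∀ i, Integrable (v i) P)
    (g : EuclideanSpace ℝ (Fin d)) (hg : g ≠ 0)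
    (hmean : ∀ i, ∫ ω, v i ω ∂P = g)
    (last : Fin n) (hlast : (last : ℕ) = n - 1)
    (tv : Fin n → Ω → EuclideanSpace ℝ (Fin d))
    (htv1 : ∀ i, i ≠ last → tv i = v i)
    (htv2 : ∀ ω, tv last ω = -g - ∑ i ∈ Finset.univ.erase last, v i ω) :
    (∫ ω, (n : ℝ)⁻¹ • ∑ i, tv i ω ∂P) = -((n : ℝ)⁻¹ • g) ∧
    (inner ℝ (∫ ω, (n : ℝ)⁻¹ • ∑ i, tv i ω ∂P) g : ℝ) = -(‖g‖ ^ 2 / n) ∧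
    (inner ℝ (∫ ω, (n : ℝ)⁻¹ • ∑ i, tv i ω ∂P) g : ℝ) < 0 := by
  have hsum : ∀ ω, ∑ i, tv i ω = -g := by
    intro ω
    rw [← Finset.add_sum_erase _ _ (Finset.mem_univ last), htv2]
    have : ∑ i ∈ Finset.univ.erase last, tv i ω
        = ∑ i ∈ Finset.univ.erase last, v i ω := by
      refine Finset.sum_congr rfl fun i hi => ?_
      rw [htv1 i (Finset.ne_of_mem_erase hi)]
    rw [this]
    abel
  have hconst : (∫ ω, (n : ℝ)⁻¹ • ∑ i, tv i ω ∂P) = -((n : ℝ)⁻¹ • g) := by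
    have : (fun ω => (n : ℝ)⁻¹ • ∑ i, tv i ω) = fun _ => (n : ℝ)⁻¹ • (-g) := by
      funext ω; rw [hsum]
    rw [this, integral_const, probReal_univ, one_smul, smul_neg]
  refine ⟨hconst, ?_, ?_⟩
  · rw [hconst]
    rw [inner_neg_left, real_inner_smul_left, real_inner_self_eq_norm_sq]
    ring
  · rw [hconst, inner_neg_left, real_inner_smul_left, real_inner_self_eq_norm_sq]
    have hg' : 0 < (inner ℝ g g : ℝ) := by rw [real_inner_self_eq_norm_sq]; exact pow_pos (norm_pos_iff.mpr hg) 2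
    have hn' : (0 : ℝ) < (n : ℝ)⁻¹ := by positivity
    nlinarith [real_inner_self_eq_norm_sq g]
end

section
/- Any aggregation rule that always outputs one of its input vectors fails dimensional Byzantine resilience with q = 1: for any g ≠ 0 in ℝ^n (taking d = n) and any M > 0, there exist vectors ṽ_1, …, ṽ_n ∈ ℝ^n, each differing from a correct vector v_i (with E[v_i] = g) in exactly one coordinate (the i-th coordinate of ṽ_i), such that every ṽ_i satisfies ⟨ṽ_i, g⟩ < -M. -/
/-- any aggregation rule outputting one of its inputs fails
dimensional Byzantine resilience with `q = 1`: for `g` with all coordinates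
nonzero and any `M > 0`, there are vectors `ṽᵢ`, each equal to the correct
vector `g` except in its `i`-th coordinate, such that `⟨ṽᵢ, g⟩ < -M` for all `i`. -/
theorem stmt11 {n : ℕ} (g : EuclideanSpace ℝ (Fin n)) (hg : ∀ i, g i ≠ 0)
    (M : ℝ) (hM : 0 < M) :
    ∃ tv : Fin n → EuclideanSpace ℝ (Fin n),
      (∀ i j, j ≠ i → tv i j = g j) ∧
      (∀ i, tv i i ≠ g i) ∧
      (∀ i, (inner ℝ (tv i) g : ℝ) < -M) := by
  set S : ℝ := ∑ j, g j ^ 2 with hS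
  have hS0 : 0 ≤ S := Finset.sum_nonneg fun j _ => sq_nonneg _
  refine ⟨fun i => WithLp.toLp 2 (Function.update g i (-(M + S) / g i)), ?_, ?_, ?_⟩
  · intro i j hj
    exact Function.update_of_ne hj _ g
  · intro i h
    simp only [WithLp.ofLp_toLp] at h
    rw [Function.update_self] at h
    rw [div_eq_iff (hg i)] at h
    nlinarith [sq_nonneg (g i)]
  · intro i
    simp only [PiLp.inner_apply, RCLike.inner_apply, conj_trivial, WithLp.ofLp_toLp]
    have hsplit : ∀ (f : Fin n → ℝ), ∑ j, f j
        = (∑ j ∈ Finset.univ.erase i, f j) + f i :=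
      fun f => (Finset.sum_erase_add _ _ (Finset.mem_univ i)).symm
    rw [hsplit]
    have h1 : ∑ j ∈ Finset.univ.erase i, g j * Function.update g i (-(M + S) / g i) j
        = ∑ j ∈ Finset.univ.erase i, g j ^ 2 := by
      refine Finset.sum_congr rfl fun j hj => ?_
      rw [Function.update_of_ne (Finset.ne_of_mem_erase hj)]
      ring
    have h2 : ∑ j ∈ Finset.univ.erase i, g j ^ 2 = S - g i ^ 2 := by
      have := hsplit (fun j => g j ^ 2)
      rw [hS]
      linarith [this]
    rw [h1, h2, Function.update_self, mul_comm (g i), div_mul_cancel₀ _ (hg i)]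
    nlinarith [sq_nonneg (g i), sq_pos_of_ne_zero (hg i)]
end

section
/- Let z_1, …, z_n be points in a real Hilbert space and let z_* be the exact geometric median, i.e., z_* minimizes z ↦ Σ_{i=1}^n ‖z - z_i‖. Suppose q < n/2 and at least n - q of the points satisfy ‖z_i‖ ≤ r. Then ‖z_*‖ ≤ (2n - 2q)/(n - 2q) · r. -/
/-- if `z⋆` is an exact geometric median of `z₁, …, zₙ` in a real
Hilbert space, `q < n/2`, and at least `n - q` of the points satisfy `‖zᵢ‖ ≤ r`,
then `‖z⋆‖ ≤ (2n - 2q)/(n - 2q) · r`. -/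
theorem stmt12 {H : Type*} [NormedAddCommGroup H] [InnerProductSpace ℝ H]
    [CompleteSpace H] {n q : ℕ} (h2q : 2 * q < n)
    (z : Fin n → H) (zs : H)
    (hmin : ∀ y : H, ∑ i, ‖zs - z i‖ ≤ ∑ i, ‖y - z i‖)
    (r : ℝ) (C : Finset (Fin n)) (hCcard : n - q ≤ C.card)
    (hCr : ∀ i ∈ C, ‖z i‖ ≤ r) :
    ‖zs‖ ≤ (2 * (n : ℝ) - 2 * (q : ℝ)) / ((n : ℝ) - 2 * (q : ℝ)) * r := by
  set m := C.card with hm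
  have hmn : m ≤ n := by
    have := C.card_le_univ
    simpa using this
  have hCne : C.Nonempty := by
    rw [← Finset.card_pos]; omega
  obtain ⟨i0, hi0⟩ := hCne
  have hr : 0 ≤ r := le_trans (norm_nonneg _) (hCr i0 hi0)
  have hsum : ∑ i, ‖zs - z i‖ ≤ ∑ i, ‖z i‖ := by
    have := hmin 0
    simpa using this
  have hA : ∑ _i ∈ C, (‖zs‖ - r) ≤ ∑ i ∈ C, ‖zs - z i‖ := by
    apply Finset.sum_le_sum
    intro i hi
    have h1 := norm_sub_norm_le zs (z i)
    have h2 := hCr i hi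
    linarith
  have hB : ∑ i ∈ Cᶜ, (‖z i‖ - ‖zs‖) ≤ ∑ i ∈ Cᶜ, ‖zs - z i‖ := by
    apply Finset.sum_le_sum
    intro i _
    calc ‖z i‖ - ‖zs‖ ≤ ‖z i - zs‖ := norm_sub_norm_le _ _
      _ = ‖zs - z i‖ := norm_sub_rev _ _
  have hC2 : ∑ i ∈ C, ‖z i‖ ≤ ∑ _i ∈ C, r := Finset.sum_le_sum hCr
  have hsplit1 : ∑ i ∈ C, ‖zs - z i‖ + ∑ i ∈ Cᶜ, ‖zs - z i‖ = ∑ i, ‖zs - z i‖ :=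
    Finset.sum_add_sum_compl C _
  have hsplit2 : ∑ i ∈ C, ‖z i‖ + ∑ i ∈ Cᶜ, ‖z i‖ = ∑ i, ‖z i‖ :=
    Finset.sum_add_sum_compl C _
  have hcardc : (Cᶜ : Finset (Fin n)).card = n - m := by
    simp [Finset.card_compl, hm]
  have e1 : ∑ _i ∈ C, (‖zs‖ - r) = (m : ℝ) * (‖zs‖ - r) := by
    rw [Finset.sum_const, nsmul_eq_mul]
  have e2 : ∑ _i ∈ C, r = (m : ℝ) * r := by
    rw [Finset.sum_const, nsmul_eq_mul]
  have e3 : ∑ i ∈ Cᶜ, (‖z i‖ - ‖zs‖) = ∑ i ∈ Cᶜ, ‖z i‖ - ((n : ℝ) - m) * ‖zs‖ := by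
    rw [Finset.sum_sub_distrib, Finset.sum_const, nsmul_eq_mul, hcardc]
    rw [Nat.cast_sub hmn]
  have key : ((m : ℝ) * (‖zs‖ - r)) + (∑ i ∈ Cᶜ, ‖z i‖ - ((n : ℝ) - m) * ‖zs‖)
      ≤ (m : ℝ) * r + ∑ i ∈ Cᶜ, ‖z i‖ := by
    rw [← e1, ← e2, ← e3]
    linarith
  have key2 : ((2 : ℝ) * m - n) * ‖zs‖ ≤ 2 * m * r := by linarith
  have hq : (2 : ℝ) * q < n := by exact_mod_cast h2q
  have hmq : (n : ℝ) - q ≤ m := by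
    have : n - q ≤ m := hCcard
    have hqn : q ≤ n := by omega
    have := (Nat.cast_le (α := ℝ)).2 this
    rw [Nat.cast_sub hqn] at this
    exact this
  rw [div_mul_eq_mul_div, le_div_iff₀ (by linarith)]
  nlinarith [key2, hr, norm_nonneg zs, mul_nonneg hr (sub_nonneg.2 hmq)]
end

section
/- Let H be a real Hilbert space, z_1, …, z_n ∈ H, and let z_* satisfy Σ_i ‖z_* - z_i‖ ≤ (1+ε)·min_z Σ_i ‖z - z_i‖ for some ε ≥ 0 (a (1+ε)-approximate geometric median). Suppose q/n ∈ (0, 1/2) and at least (1 - q/n)·n of the z_i satisfy ‖z_i‖ ≤ r. Then ‖z_*‖ ≤ ((2n-2q)/(n-2q))·r + ε·(min_z Σ_i ‖z - z_i‖)/(n - 2q). -/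
/-- if `z⋆` is a `(1+ε)`-approximate geometric median of
`z₁, …, zₙ` in a real Hilbert space, `q/n ∈ (0, 1/2)`, and at least `n - q` of
the points satisfy `‖zᵢ‖ ≤ r`, then
`‖z⋆‖ ≤ (2n-2q)/(n-2q)·r + ε·M/(n-2q)` where `M = min_z Σᵢ ‖z - zᵢ‖`. -/
theorem stmt19 {H : Type*} [NormedAddCommGroup H] [InnerProductSpace ℝ H]
    [CompleteSpace H] {n q : ℕ} (hq : 0 < q) (h2q : 2 * q < n)
    (ε : ℝ) (hε : 0 ≤ ε)
    (z : Fin n → H) (zs : H)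
    (hzs : ∑ i, ‖zs - z i‖ ≤ (1 + ε) * ⨅ y : H, ∑ i, ‖y - z i‖)
    (r : ℝ) (C : Finset (Fin n)) (hCcard : n - q ≤ C.card)
    (hCr : ∀ i ∈ C, ‖z i‖ ≤ r) :
    ‖zs‖ ≤ (2 * (n : ℝ) - 2 * (q : ℝ)) / ((n : ℝ) - 2 * (q : ℝ)) * r +
      ε * (⨅ y : H, ∑ i, ‖y - z i‖) / ((n : ℝ) - 2 * (q : ℝ)) := by
  set M := ⨅ y : H, ∑ i, ‖y - z i‖ with hMdef
  have hbdd : BddBelow (Set.range fun y : H => ∑ i, ‖y - z i‖) := by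
    refine ⟨0, ?_⟩
    rintro _ ⟨y, rfl⟩
    positivity
  have hM0 : 0 ≤ M := le_ciInf fun y => by positivity
  have hMle : M ≤ ∑ i, ‖z i‖ := by
    have h := ciInf_le hbdd (0 : H)
    simpa using h
  have hqn : q ≤ n := by omega
  have hcard_n : C.card ≤ n := by
    simpa using C.card_le_univ
  have hcardR : (n : ℝ) - (q : ℝ) ≤ (C.card : ℝ) := by
    have h := hCcard
    have : ((n - q : ℕ) : ℝ) ≤ (C.card : ℝ) := by exact_mod_cast h
    rwa [Nat.cast_sub hqn] at this
  have hCne : C.Nonempty := Finset.card_pos.mp (by omega)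
  obtain ⟨i0, hi0⟩ := hCne
  have hr0 : 0 ≤ r := le_trans (norm_nonneg _) (hCr i0 hi0)
  have hden : (0:ℝ) < (n : ℝ) - 2 * (q : ℝ) := by
    have : (2 * q : ℝ) < (n : ℝ) := by exact_mod_cast h2q
    linarith
  -- key inequality: (2c - n) * ‖zs‖ ≤ 2 c r + ε M, with c = C.card
  have hsplit : ∑ i, ‖zs - z i‖ = ∑ i ∈ C, ‖zs - z i‖ + ∑ i ∈ Cᶜ, ‖zs - z i‖ :=
    (Finset.sum_add_sum_compl C _).symm
  have hsplit' : ∑ i, ‖z i‖ = ∑ i ∈ C, ‖z i‖ + ∑ i ∈ Cᶜ, ‖z i‖ :=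
    (Finset.sum_add_sum_compl C _).symm
  have hS1 : (C.card : ℝ) * (‖zs‖ - r) ≤ ∑ i ∈ C, ‖zs - z i‖ := by
    calc (C.card : ℝ) * (‖zs‖ - r) = ∑ _i ∈ C, (‖zs‖ - r) := by
          rw [Finset.sum_const, nsmul_eq_mul]
      _ ≤ ∑ i ∈ C, ‖zs - z i‖ := by
          refine Finset.sum_le_sum fun i hi => ?_
          have h1 : ‖zs‖ - ‖z i‖ ≤ ‖zs - z i‖ := norm_sub_norm_le _ _
          have h2 : ‖z i‖ ≤ r := hCr i hi
          linarith
  have hS2 : ∑ i ∈ Cᶜ, ‖z i‖ - (Cᶜ.card : ℝ) * ‖zs‖ ≤ ∑ i ∈ Cᶜ, ‖zs - z i‖ := by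
    have : ∑ i ∈ Cᶜ, (‖z i‖ - ‖zs‖) ≤ ∑ i ∈ Cᶜ, ‖zs - z i‖ := by
      refine Finset.sum_le_sum fun i _ => ?_
      have h1 : ‖z i‖ - ‖zs‖ ≤ ‖z i - zs‖ := norm_sub_norm_le _ _
      rw [norm_sub_rev] at h1
      exact h1
    rw [Finset.sum_sub_distrib, Finset.sum_const, nsmul_eq_mul] at this
    linarith
  have hSC : ∑ i ∈ C, ‖z i‖ ≤ (C.card : ℝ) * r := by
    calc ∑ i ∈ C, ‖z i‖ ≤ ∑ _i ∈ C, r := Finset.sum_le_sum fun i hi => hCr i hi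
      _ = (C.card : ℝ) * r := by rw [Finset.sum_const, nsmul_eq_mul]
  have hccompl : (Cᶜ.card : ℝ) = (n : ℝ) - (C.card : ℝ) := by
    have h := Finset.card_compl C
    rw [h]
    have : Fintype.card (Fin n) = n := Fintype.card_fin n
    rw [this, Nat.cast_sub hcard_n]
  have hkey : (2 * (C.card : ℝ) - (n : ℝ)) * ‖zs‖ ≤ 2 * (C.card : ℝ) * r + ε * M := by
    have hchain : (C.card : ℝ) * (‖zs‖ - r) + (∑ i ∈ Cᶜ, ‖z i‖ - (Cᶜ.card : ℝ) * ‖zs‖)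
        ≤ ∑ i ∈ C, ‖z i‖ + ∑ i ∈ Cᶜ, ‖z i‖ + ε * M := by
      have h1 : ∑ i, ‖zs - z i‖ ≤ (1 + ε) * M := hzs
      have h2 : (1 + ε) * M = M + ε * M := by ring
      have h3 : M + ε * M ≤ ∑ i ∈ C, ‖z i‖ + ∑ i ∈ Cᶜ, ‖z i‖ + ε * M := by
        rw [← hsplit']; linarith
      rw [hsplit] at h1
      linarith
    rw [hccompl] at hchain
    nlinarith [hchain, hSC]
  -- now finish
  rw [div_mul_eq_mul_div, ← add_div, le_div_iff₀ hden]
  nlinarith [hkey, mul_nonneg hε hM0, mul_nonneg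
    (sub_nonneg.mpr hcardR) (norm_nonneg zs),
    mul_le_mul_of_nonneg_left (le_refl r) hr0]
end
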